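/- Let 𝔤 be a 5-dimensional real Lie algebra with a hypo structure (α, ω₁, ω₂, ω₃), and let β ∈ 𝔤* be the 1-form β(X) = tr(ad X). Then α and β are orthogonal with respect to the metric induced by the hypo structure; equivalently, in any adapted coframe f¹,...,f⁵ with α = f⁵ and dual frame f₁,...,f₅, one has β(f₅) = 0. -/

import Mathlib

open ExteriorAlgebra

/-- Basis `e¹,…,e⁵` of `𝔤*` (0-indexed) inside `Λ*𝔤*`. -/
noncomputable def e (i : Fin 5) : ExteriorAlgebra ℝ (Fin 5 → ℝ) := ι ℝ (Pi.single i 1)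


noncomputable def GG : ∀ i : ℕ, ((Fin 5 → ℝ) [⋀^Fin i]→ₗ[ℝ] ℝ) :=
  Function.update (fun _ => 0) 5 Matrix.detRowAlternating

noncomputable def Phi : ExteriorAlgebra ℝ (Fin 5 → ℝ) →ₗ[ℝ] ℝ := liftAlternating GG

lemma GG5 : GG 5 = Matrix.detRowAlternating := Function.update_self _ _ _

noncomputable def Det (v : Fin 5 → Fin 5 → ℝ) : ℝ := Matrix.detRowAlternating v

lemma DetZ (w : Fin 5 → Fin 5 → ℝ) (i j : Fin 5) (h : w i = w j) (hij : i ≠ j) : Det w = 0 :=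
  AlternatingMap.map_eq_zero_of_eq _ w h hij

lemma DetP (w : Fin 5 → Fin 5 → ℝ) (σ : Equiv.Perm (Fin 5)) :
    Det (w ∘ σ) = (Equiv.Perm.sign σ : ℤ) • Det w :=
  Matrix.detRowAlternating.map_perm w σ

lemma Phi5 (a b c dd e' : Fin 5 → ℝ) :
    Phi (ι ℝ a * (ι ℝ b * (ι ℝ c * (ι ℝ dd * ι ℝ e')))) = Det ![a, b, c, dd, e'] := by
  have h : ι ℝ a * (ι ℝ b * (ι ℝ c * (ι ℝ dd * ι ℝ e'))) = ιMulti ℝ 5 ![a, b, c, dd, e'] := by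
    rw [ιMulti_apply]
    simp [List.ofFn_succ, mul_assoc]
  rw [h, Phi, liftAlternating_apply_ιMulti, GG5, Det]

lemma DetM (M : Matrix (Fin 5) (Fin 5) ℝ) : Det M = M.det := rfl

lemma detA (f : Fin 5 → Fin 5 → ℝ) : Det ![f 0, f 4, f 1, f 2, f 3] = - Det f := by
  have hσ : (![f 0, f 4, f 1, f 2, f 3] : Fin 5 → Fin 5 → ℝ) =
      f ∘ (⟨![0, 4, 1, 2, 3], ![0, 2, 3, 4, 1], by decide, by decide⟩ : Equiv.Perm (Fin 5)) := by
    funext i; fin_cases i <;> rfl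
  rw [hσ, DetP, show Equiv.Perm.sign (⟨![0, 4, 1, 2, 3], ![0, 2, 3, 4, 1], by decide, by decide⟩ : Equiv.Perm (Fin 5)) = -1 from by decide]
  norm_num

lemma detB (f : Fin 5 → Fin 5 → ℝ) : Det ![f 4, f 0, f 1, f 2, f 3] = Det f := by
  have hσ : (![f 4, f 0, f 1, f 2, f 3] : Fin 5 → Fin 5 → ℝ) =
      f ∘ (⟨![4, 0, 1, 2, 3], ![1, 2, 3, 4, 0], by decide, by decide⟩ : Equiv.Perm (Fin 5)) := by
    funext i; fin_cases i <;> rfl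
  rw [hσ, DetP, show Equiv.Perm.sign (⟨![4, 0, 1, 2, 3], ![1, 2, 3, 4, 0], by decide, by decide⟩ : Equiv.Perm (Fin 5)) = 1 from by decide]
  norm_num

lemma detC (f : Fin 5 → Fin 5 → ℝ) : Det ![f 0, f 1, f 4, f 2, f 3] = Det f := by
  have hσ : (![f 0, f 1, f 4, f 2, f 3] : Fin 5 → Fin 5 → ℝ) =
      f ∘ (⟨![0, 1, 4, 2, 3], ![0, 1, 3, 4, 2], by decide, by decide⟩ : Equiv.Perm (Fin 5)) := by
    funext i; fin_cases i <;> rfl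
  rw [hσ, DetP, show Equiv.Perm.sign (⟨![0, 1, 4, 2, 3], ![0, 1, 3, 4, 2], by decide, by decide⟩ : Equiv.Perm (Fin 5)) = 1 from by decide]
  norm_num

lemma detD (f : Fin 5 → Fin 5 → ℝ) : Det ![f 0, f 1, f 2, f 4, f 3] = - Det f := by
  have hσ : (![f 0, f 1, f 2, f 4, f 3] : Fin 5 → Fin 5 → ℝ) =
      f ∘ (⟨![0, 1, 2, 4, 3], ![0, 1, 2, 4, 3], by decide, by decide⟩ : Equiv.Perm (Fin 5)) := by
    funext i; fin_cases i <;> rfl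
  rw [hσ, DetP, show Equiv.Perm.sign (⟨![0, 1, 2, 4, 3], ![0, 1, 2, 4, 3], by decide, by decide⟩ : Equiv.Perm (Fin 5)) = -1 from by decide]
  norm_num

lemma detE (f : Fin 5 → Fin 5 → ℝ) : Det ![f 0, f 1, f 2, f 3, f 4] = Det f := by
  congr 1; funext i; fin_cases i <;> rfl

lemma sum0 (f : Fin 5 → Fin 5 → ℝ) (t : Fin 5 → Fin 5 → ℝ) :
    (∑ a : Fin 5, ∑ b : Fin 5, t a b * Det ![f a, f b, f 1, f 2, f 3]) = (t 0 4) * (- Det f) + (t 4 0) * Det f := by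
  simp only [Fin.sum_univ_five]
  rw [show Det ![f 0, f 0, f 1, f 2, f 3] = 0 from DetZ _ 0 1 rfl (by decide),
    show Det ![f 0, f 1, f 1, f 2, f 3] = 0 from DetZ _ 1 2 rfl (by decide),
    show Det ![f 0, f 2, f 1, f 2, f 3] = 0 from DetZ _ 1 3 rfl (by decide),
    show Det ![f 0, f 3, f 1, f 2, f 3] = 0 from DetZ _ 1 4 rfl (by decide),
    show Det ![f 1, f 0, f 1, f 2, f 3] = 0 from DetZ _ 0 2 rfl (by decide),
    show Det ![f 1, f 1, f 1, f 2, f 3] = 0 from DetZ _ 0 1 rfl (by decide),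
    show Det ![f 1, f 2, f 1, f 2, f 3] = 0 from DetZ _ 0 2 rfl (by decide),
    show Det ![f 1, f 3, f 1, f 2, f 3] = 0 from DetZ _ 0 2 rfl (by decide),
    show Det ![f 1, f 4, f 1, f 2, f 3] = 0 from DetZ _ 0 2 rfl (by decide),
    show Det ![f 2, f 0, f 1, f 2, f 3] = 0 from DetZ _ 0 3 rfl (by decide),
    show Det ![f 2, f 1, f 1, f 2, f 3] = 0 from DetZ _ 0 3 rfl (by decide),
    show Det ![f 2, f 2, f 1, f 2, f 3] = 0 from DetZ _ 0 1 rfl (by decide),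
    show Det ![f 2, f 3, f 1, f 2, f 3] = 0 from DetZ _ 0 3 rfl (by decide),
    show Det ![f 2, f 4, f 1, f 2, f 3] = 0 from DetZ _ 0 3 rfl (by decide),
    show Det ![f 3, f 0, f 1, f 2, f 3] = 0 from DetZ _ 0 4 rfl (by decide),
    show Det ![f 3, f 1, f 1, f 2, f 3] = 0 from DetZ _ 0 4 rfl (by decide),
    show Det ![f 3, f 2, f 1, f 2, f 3] = 0 from DetZ _ 0 4 rfl (by decide),
    show Det ![f 3, f 3, f 1, f 2, f 3] = 0 from DetZ _ 0 1 rfl (by decide),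
    show Det ![f 3, f 4, f 1, f 2, f 3] = 0 from DetZ _ 0 4 rfl (by decide),
    show Det ![f 4, f 1, f 1, f 2, f 3] = 0 from DetZ _ 1 2 rfl (by decide),
    show Det ![f 4, f 2, f 1, f 2, f 3] = 0 from DetZ _ 1 3 rfl (by decide),
    show Det ![f 4, f 3, f 1, f 2, f 3] = 0 from DetZ _ 1 4 rfl (by decide),
    show Det ![f 4, f 4, f 1, f 2, f 3] = 0 from DetZ _ 0 1 rfl (by decide),
    detA f, detB f]
  ring

lemma sum1 (f : Fin 5 → Fin 5 → ℝ) (t : Fin 5 → Fin 5 → ℝ) :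
    (∑ a : Fin 5, ∑ b : Fin 5, t a b * Det ![f 0, f a, f b, f 2, f 3]) = (t 1 4) * Det f + (t 4 1) * (- Det f) := by
  simp only [Fin.sum_univ_five]
  rw [show Det ![f 0, f 0, f 0, f 2, f 3] = 0 from DetZ _ 0 1 rfl (by decide),
    show Det ![f 0, f 0, f 1, f 2, f 3] = 0 from DetZ _ 0 1 rfl (by decide),
    show Det ![f 0, f 0, f 2, f 2, f 3] = 0 from DetZ _ 0 1 rfl (by decide),
    show Det ![f 0, f 0, f 3, f 2, f 3] = 0 from DetZ _ 0 1 rfl (by decide),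
    show Det ![f 0, f 0, f 4, f 2, f 3] = 0 from DetZ _ 0 1 rfl (by decide),
    show Det ![f 0, f 1, f 0, f 2, f 3] = 0 from DetZ _ 0 2 rfl (by decide),
    show Det ![f 0, f 1, f 1, f 2, f 3] = 0 from DetZ _ 1 2 rfl (by decide),
    show Det ![f 0, f 1, f 2, f 2, f 3] = 0 from DetZ _ 2 3 rfl (by decide),
    show Det ![f 0, f 1, f 3, f 2, f 3] = 0 from DetZ _ 2 4 rfl (by decide),
    show Det ![f 0, f 2, f 0, f 2, f 3] = 0 from DetZ _ 0 2 rfl (by decide),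
    show Det ![f 0, f 2, f 1, f 2, f 3] = 0 from DetZ _ 1 3 rfl (by decide),
    show Det ![f 0, f 2, f 2, f 2, f 3] = 0 from DetZ _ 1 2 rfl (by decide),
    show Det ![f 0, f 2, f 3, f 2, f 3] = 0 from DetZ _ 1 3 rfl (by decide),
    show Det ![f 0, f 2, f 4, f 2, f 3] = 0 from DetZ _ 1 3 rfl (by decide),
    show Det ![f 0, f 3, f 0, f 2, f 3] = 0 from DetZ _ 0 2 rfl (by decide),
    show Det ![f 0, f 3, f 1, f 2, f 3] = 0 from DetZ _ 1 4 rfl (by decide),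
    show Det ![f 0, f 3, f 2, f 2, f 3] = 0 from DetZ _ 1 4 rfl (by decide),
    show Det ![f 0, f 3, f 3, f 2, f 3] = 0 from DetZ _ 1 2 rfl (by decide),
    show Det ![f 0, f 3, f 4, f 2, f 3] = 0 from DetZ _ 1 4 rfl (by decide),
    show Det ![f 0, f 4, f 0, f 2, f 3] = 0 from DetZ _ 0 2 rfl (by decide),
    show Det ![f 0, f 4, f 2, f 2, f 3] = 0 from DetZ _ 2 3 rfl (by decide),
    show Det ![f 0, f 4, f 3, f 2, f 3] = 0 from DetZ _ 2 4 rfl (by decide),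
    show Det ![f 0, f 4, f 4, f 2, f 3] = 0 from DetZ _ 1 2 rfl (by decide),
    detC f, detA f]
  ring

lemma sum2 (f : Fin 5 → Fin 5 → ℝ) (t : Fin 5 → Fin 5 → ℝ) :
    (∑ a : Fin 5, ∑ b : Fin 5, t a b * Det ![f 0, f 1, f a, f b, f 3]) = (t 2 4) * (- Det f) + (t 4 2) * Det f := by
  simp only [Fin.sum_univ_five]
  rw [show Det ![f 0, f 1, f 0, f 0, f 3] = 0 from DetZ _ 0 2 rfl (by decide),
    show Det ![f 0, f 1, f 0, f 1, f 3] = 0 from DetZ _ 0 2 rfl (by decide),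
    show Det ![f 0, f 1, f 0, f 2, f 3] = 0 from DetZ _ 0 2 rfl (by decide),
    show Det ![f 0, f 1, f 0, f 3, f 3] = 0 from DetZ _ 0 2 rfl (by decide),
    show Det ![f 0, f 1, f 0, f 4, f 3] = 0 from DetZ _ 0 2 rfl (by decide),
    show Det ![f 0, f 1, f 1, f 0, f 3] = 0 from DetZ _ 0 3 rfl (by decide),
    show Det ![f 0, f 1, f 1, f 1, f 3] = 0 from DetZ _ 1 2 rfl (by decide),
    show Det ![f 0, f 1, f 1, f 2, f 3] = 0 from DetZ _ 1 2 rfl (by decide),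
    show Det ![f 0, f 1, f 1, f 3, f 3] = 0 from DetZ _ 1 2 rfl (by decide),
    show Det ![f 0, f 1, f 1, f 4, f 3] = 0 from DetZ _ 1 2 rfl (by decide),
    show Det ![f 0, f 1, f 2, f 0, f 3] = 0 from DetZ _ 0 3 rfl (by decide),
    show Det ![f 0, f 1, f 2, f 1, f 3] = 0 from DetZ _ 1 3 rfl (by decide),
    show Det ![f 0, f 1, f 2, f 2, f 3] = 0 from DetZ _ 2 3 rfl (by decide),
    show Det ![f 0, f 1, f 2, f 3, f 3] = 0 from DetZ _ 3 4 rfl (by decide),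
    show Det ![f 0, f 1, f 3, f 0, f 3] = 0 from DetZ _ 0 3 rfl (by decide),
    show Det ![f 0, f 1, f 3, f 1, f 3] = 0 from DetZ _ 1 3 rfl (by decide),
    show Det ![f 0, f 1, f 3, f 2, f 3] = 0 from DetZ _ 2 4 rfl (by decide),
    show Det ![f 0, f 1, f 3, f 3, f 3] = 0 from DetZ _ 2 3 rfl (by decide),
    show Det ![f 0, f 1, f 3, f 4, f 3] = 0 from DetZ _ 2 4 rfl (by decide),
    show Det ![f 0, f 1, f 4, f 0, f 3] = 0 from DetZ _ 0 3 rfl (by decide),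
    show Det ![f 0, f 1, f 4, f 1, f 3] = 0 from DetZ _ 1 3 rfl (by decide),
    show Det ![f 0, f 1, f 4, f 3, f 3] = 0 from DetZ _ 3 4 rfl (by decide),
    show Det ![f 0, f 1, f 4, f 4, f 3] = 0 from DetZ _ 2 3 rfl (by decide),
    detD f, detC f]
  ring

lemma sum3 (f : Fin 5 → Fin 5 → ℝ) (t : Fin 5 → Fin 5 → ℝ) :
    (∑ a : Fin 5, ∑ b : Fin 5, t a b * Det ![f 0, f 1, f 2, f a, f b]) = (t 3 4) * Det f + (t 4 3) * (- Det f) := by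
  simp only [Fin.sum_univ_five]
  rw [show Det ![f 0, f 1, f 2, f 0, f 0] = 0 from DetZ _ 0 3 rfl (by decide),
    show Det ![f 0, f 1, f 2, f 0, f 1] = 0 from DetZ _ 0 3 rfl (by decide),
    show Det ![f 0, f 1, f 2, f 0, f 2] = 0 from DetZ _ 0 3 rfl (by decide),
    show Det ![f 0, f 1, f 2, f 0, f 3] = 0 from DetZ _ 0 3 rfl (by decide),
    show Det ![f 0, f 1, f 2, f 0, f 4] = 0 from DetZ _ 0 3 rfl (by decide),
    show Det ![f 0, f 1, f 2, f 1, f 0] = 0 from DetZ _ 0 4 rfl (by decide),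
    show Det ![f 0, f 1, f 2, f 1, f 1] = 0 from DetZ _ 1 3 rfl (by decide),
    show Det ![f 0, f 1, f 2, f 1, f 2] = 0 from DetZ _ 1 3 rfl (by decide),
    show Det ![f 0, f 1, f 2, f 1, f 3] = 0 from DetZ _ 1 3 rfl (by decide),
    show Det ![f 0, f 1, f 2, f 1, f 4] = 0 from DetZ _ 1 3 rfl (by decide),
    show Det ![f 0, f 1, f 2, f 2, f 0] = 0 from DetZ _ 0 4 rfl (by decide),
    show Det ![f 0, f 1, f 2, f 2, f 1] = 0 from DetZ _ 1 4 rfl (by decide),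
    show Det ![f 0, f 1, f 2, f 2, f 2] = 0 from DetZ _ 2 3 rfl (by decide),
    show Det ![f 0, f 1, f 2, f 2, f 3] = 0 from DetZ _ 2 3 rfl (by decide),
    show Det ![f 0, f 1, f 2, f 2, f 4] = 0 from DetZ _ 2 3 rfl (by decide),
    show Det ![f 0, f 1, f 2, f 3, f 0] = 0 from DetZ _ 0 4 rfl (by decide),
    show Det ![f 0, f 1, f 2, f 3, f 1] = 0 from DetZ _ 1 4 rfl (by decide),
    show Det ![f 0, f 1, f 2, f 3, f 2] = 0 from DetZ _ 2 4 rfl (by decide),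
    show Det ![f 0, f 1, f 2, f 3, f 3] = 0 from DetZ _ 3 4 rfl (by decide),
    show Det ![f 0, f 1, f 2, f 4, f 0] = 0 from DetZ _ 0 4 rfl (by decide),
    show Det ![f 0, f 1, f 2, f 4, f 1] = 0 from DetZ _ 1 4 rfl (by decide),
    show Det ![f 0, f 1, f 2, f 4, f 2] = 0 from DetZ _ 2 4 rfl (by decide),
    show Det ![f 0, f 1, f 2, f 4, f 4] = 0 from DetZ _ 3 4 rfl (by decide),
    detE f, detD f]
  ring


set_option maxHeartbeats 4000000 in
/-- let `𝔤` be a 5-dimensional real Lie algebra, with bracket `B` (on `ℝ⁵`)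
and Chevalley–Eilenberg differential `d` on `Λ*𝔤*` (linked to `B` by
`dξ = −Σ_{i<j} ξ([eᵢ,eⱼ]) eⁱ∧eʲ`), carrying a hypo structure with adapted coframe
`f¹,…,f⁵` (so `α = f⁵`). If `X = f₅` is the corresponding dual frame vector
(`fⁱ(X) = δⁱ₅`), then `β(X) = tr(ad X) = 0`; i.e. `α` and `β` are orthogonal. -/
theorem stmt7
    (B : (Fin 5 → ℝ) →ₗ[ℝ] (Fin 5 → ℝ) →ₗ[ℝ] (Fin 5 → ℝ))
    (hanti : ∀ X Y, B X Y = - B Y X)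
    (hjac : ∀ X Y Z, B X (B Y Z) = B (B X Y) Z + B Y (B X Z))
    (d : ExteriorAlgebra ℝ (Fin 5 → ℝ) →ₗ[ℝ] ExteriorAlgebra ℝ (Fin 5 → ℝ))
    (hone : d 1 = 0)
    (hleib : ∀ (v : Fin 5 → ℝ) (x : ExteriorAlgebra ℝ (Fin 5 → ℝ)),
      d (ι ℝ v * x) = d (ι ℝ v) * x - ι ℝ v * d x)
    (hlink : ∀ ξ : Fin 5 → ℝ, d (ι ℝ ξ) =
      -((1 : ℝ)/2) • ∑ i : Fin 5, ∑ j : Fin 5,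
        (∑ k : Fin 5, ξ k * B (Pi.single i 1) (Pi.single j 1) k) • (e i * e j))
    (f : Fin 5 → (Fin 5 → ℝ)) (hf : LinearIndependent ℝ f)
    (hw1 : d (ι ℝ (f 0) * ι ℝ (f 1) + ι ℝ (f 2) * ι ℝ (f 3)) = 0)
    (hw2 : d ((ι ℝ (f 0) * ι ℝ (f 2) + ι ℝ (f 3) * ι ℝ (f 1)) * ι ℝ (f 4)) = 0)
    (hw3 : d ((ι ℝ (f 0) * ι ℝ (f 3) + ι ℝ (f 1) * ι ℝ (f 2)) * ι ℝ (f 4)) = 0)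
    (X : Fin 5 → ℝ)
    (hX : ∀ i, (∑ k, f i k * X k) = if i = 4 then (1 : ℝ) else 0) :
    LinearMap.trace ℝ (Fin 5 → ℝ) (B X) = 0 := by
  classical
  -- generic sum-exchange helpers
  have sum_swap3 : ∀ {M : Type} [AddCommMonoid M] (F : Fin 5 → Fin 5 → Fin 5 → M),
      (∑ k : Fin 5, ∑ i : Fin 5, ∑ j : Fin 5, F k i j)
        = ∑ i : Fin 5, ∑ j : Fin 5, ∑ k : Fin 5, F k i j := by
    intro M _ F
    calc (∑ k : Fin 5, ∑ i : Fin 5, ∑ j : Fin 5, F k i j)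
        = ∑ i : Fin 5, ∑ k : Fin 5, ∑ j : Fin 5, F k i j := Finset.sum_comm
      _ = ∑ i : Fin 5, ∑ j : Fin 5, ∑ k : Fin 5, F k i j :=
          Finset.sum_congr rfl fun i _ => Finset.sum_comm
  have sum_swap4 : ∀ {M : Type} [AddCommMonoid M] (F : Fin 5 → Fin 5 → Fin 5 → Fin 5 → M),
      (∑ i : Fin 5, ∑ j : Fin 5, ∑ a : Fin 5, ∑ b : Fin 5, F i j a b)
        = ∑ a : Fin 5, ∑ b : Fin 5, ∑ i : Fin 5, ∑ j : Fin 5, F i j a b := by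
    intro M _ F
    calc (∑ i : Fin 5, ∑ j : Fin 5, ∑ a : Fin 5, ∑ b : Fin 5, F i j a b)
        = ∑ i : Fin 5, ∑ a : Fin 5, ∑ j : Fin 5, ∑ b : Fin 5, F i j a b :=
          Finset.sum_congr rfl fun i _ => Finset.sum_comm
      _ = ∑ a : Fin 5, ∑ i : Fin 5, ∑ j : Fin 5, ∑ b : Fin 5, F i j a b := Finset.sum_comm
      _ = ∑ a : Fin 5, ∑ i : Fin 5, ∑ b : Fin 5, ∑ j : Fin 5, F i j a b :=
          Finset.sum_congr rfl fun a _ => Finset.sum_congr rfl fun i _ => Finset.sum_comm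
      _ = ∑ a : Fin 5, ∑ b : Fin 5, ∑ i : Fin 5, ∑ j : Fin 5, F i j a b :=
          Finset.sum_congr rfl fun a _ => Finset.sum_comm
  -- the dual frame
  have hcard : Fintype.card (Fin 5) = Module.finrank ℝ (Fin 5 → ℝ) := by simp
  let bF : Module.Basis (Fin 5) ℝ (Fin 5 → ℝ) := basisOfLinearIndependentOfCardEqFinrank hf hcard
  have hbF : ⇑bF = f := coe_basisOfLinearIndependentOfCardEqFinrank hf hcard
  set g : Fin 5 → Fin 5 → ℝ := fun a i => bF.repr (Pi.single i 1) a with hgdef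
  have hsingle : ∀ w : Fin 5 → ℝ, ∑ i, w i • (Pi.single i (1:ℝ) : Fin 5 → ℝ) = w := by
    intro w; funext j
    rw [Finset.sum_apply]
    simp [Pi.single_apply]
  have hG3 : ∀ i : Fin 5, (Pi.single i (1:ℝ) : Fin 5 → ℝ) = ∑ a, g a i • f a := by
    intro i
    have h := bF.sum_repr (Pi.single i 1)
    rw [hbF] at h
    exact h.symm
  have hG1 : ∀ a b, (∑ k, f b k * g a k) = if b = a then 1 else 0 := by
    intro a b
    have h1 : (∑ k, f b k * g a k) = bF.repr (∑ k, f b k • (Pi.single k (1:ℝ) : Fin 5 → ℝ)) a := by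
      rw [map_sum]
      simp [hgdef, smul_eq_mul]
    rw [h1, hsingle (f b), ← hbF, bF.repr_self, Finsupp.single_apply]
  have hG2 : ∀ i k, (∑ p, g p i * f p k) = if k = i then 1 else 0 := by
    intro i k
    have h := congrFun (hG3 i) k
    rw [Finset.sum_apply] at h
    simp only [Pi.smul_apply, smul_eq_mul] at h
    rw [← h]
    simp [Pi.single_apply]
  have hG4 : g 4 = X := by
    set u : Fin 5 → ℝ := fun i => X i - g 4 i with hudef
    have hu : ∀ b, (∑ k, f b k * u k) = 0 := by
      intro b
      have h1 := hX b
      have h2 := hG1 4 b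
      simp only [hudef, mul_sub, Finset.sum_sub_distrib]
      rw [h1, h2]
      by_cases hb : b = 4 <;> simp [hb]
    have hq : (∑ i, u i * u i) = 0 := by
      have hrep : ∀ i, u i = ∑ a, bF.repr u a * f a i := by
        intro i
        have h := congrFun (bF.sum_repr u) i
        rw [Finset.sum_apply] at h
        simp only [hbF, Pi.smul_apply, smul_eq_mul] at h
        exact h.symm
      calc (∑ i, u i * u i) = ∑ i, (∑ a, bF.repr u a * f a i) * u i := by
            refine Finset.sum_congr rfl fun i _ => by rw [← hrep i]
        _ = ∑ a, bF.repr u a * (∑ i, f a i * u i) := by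
            simp only [Finset.sum_mul]
            rw [Finset.sum_comm]
            refine Finset.sum_congr rfl fun a _ => by
              rw [Finset.mul_sum]
              refine Finset.sum_congr rfl fun i _ => by ring
        _ = 0 := by simp [hu]
    have hz : ∀ i ∈ Finset.univ, u i * u i = 0 :=
      (Finset.sum_eq_zero_iff_of_nonneg fun i _ => mul_self_nonneg (u i)).mp hq
    funext i
    have h := mul_self_eq_zero.mp (hz i (Finset.mem_univ i))
    have h' : X i - g 4 i = 0 := h
    linarith
  have hΔ : Det f ≠ 0 := by
    let Fm : Matrix (Fin 5) (Fin 5) ℝ := fun p k => f p k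
    let Gm : Matrix (Fin 5) (Fin 5) ℝ := fun k a => g a k
    have hFG : Fm * Gm = 1 := by
      ext b a
      rw [Matrix.mul_apply, Matrix.one_apply]
      exact hG1 a b
    have hdet : Fm.det * Gm.det = 1 := by
      rw [← Matrix.det_mul, hFG, Matrix.det_one]
    have hF : Det f = Fm.det := DetM Fm
    rw [hF]
    intro h
    rw [h, zero_mul] at hdet
    norm_num at hdet
  -- exterior algebra: d(f0∧f1∧f2∧f3) = 0
  have anti : ∀ x y : Fin 5 → ℝ, ι ℝ y * ι ℝ x = -(ι ℝ x * ι ℝ y) := fun x y =>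
    eq_neg_of_add_eq_zero_right (ι_add_mul_swap x y)
  have hswap : ∀ (x y : Fin 5 → ℝ) (c : ExteriorAlgebra ℝ (Fin 5 → ℝ)),
      ι ℝ x * (ι ℝ y * c) = -(ι ℝ y * (ι ℝ x * c)) := by
    intro x y c
    rw [← mul_assoc, anti y x, neg_mul, mul_assoc]
  have hww : (ι ℝ (f 0) * ι ℝ (f 1) + ι ℝ (f 2) * ι ℝ (f 3)) * (ι ℝ (f 0) * ι ℝ (f 1) + ι ℝ (f 2) * ι ℝ (f 3))
      = (2:ℝ) • (ι ℝ (f 0) * (ι ℝ (f 1) * (ι ℝ (f 2) * ι ℝ (f 3)))) := by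
    have h11 : ι ℝ (f 0) * ι ℝ (f 1) * (ι ℝ (f 0) * ι ℝ (f 1)) = 0 := by
      rw [mul_assoc, hswap (f 1) (f 0) (ι ℝ (f 1)), ι_sq_zero, mul_zero, neg_zero, mul_zero]
    have h22 : ι ℝ (f 2) * ι ℝ (f 3) * (ι ℝ (f 2) * ι ℝ (f 3)) = 0 := by
      rw [mul_assoc, hswap (f 3) (f 2) (ι ℝ (f 3)), ι_sq_zero, mul_zero, neg_zero, mul_zero]
    have h21 : ι ℝ (f 2) * ι ℝ (f 3) * (ι ℝ (f 0) * ι ℝ (f 1))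
        = ι ℝ (f 0) * (ι ℝ (f 1) * (ι ℝ (f 2) * ι ℝ (f 3))) := by
      rw [mul_assoc, hswap (f 3) (f 0) (ι ℝ (f 1)), mul_neg,
        hswap (f 2) (f 0) (ι ℝ (f 3) * ι ℝ (f 1)), neg_neg, anti (f 1) (f 3), mul_neg,
        hswap (f 2) (f 1) (ι ℝ (f 3)), neg_neg]
    rw [add_mul, mul_add, mul_add, h11, h22, h21, mul_assoc, zero_add, add_zero, ← two_smul ℝ]
  have hdw : d (ι ℝ (f 0) * ι ℝ (f 1) + ι ℝ (f 2) * ι ℝ (f 3))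
      = (d (ι ℝ (f 0)) * ι ℝ (f 1) - ι ℝ (f 0) * d (ι ℝ (f 1)))
        + (d (ι ℝ (f 2)) * ι ℝ (f 3) - ι ℝ (f 2) * d (ι ℝ (f 3))) := by
    rw [map_add, hleib (f 0), hleib (f 2)]
  have hS : (d (ι ℝ (f 0)) * ι ℝ (f 1) - ι ℝ (f 0) * d (ι ℝ (f 1)))
        + (d (ι ℝ (f 2)) * ι ℝ (f 3) - ι ℝ (f 2) * d (ι ℝ (f 3))) = 0 := by rw [← hdw, hw1]
  have hA : d (ι ℝ (f 0) * (ι ℝ (f 1) * (ι ℝ (f 2) * ι ℝ (f 3)))) = 0 := by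
    have hd2 : d ((ι ℝ (f 0) * ι ℝ (f 1) + ι ℝ (f 2) * ι ℝ (f 3)) * (ι ℝ (f 0) * ι ℝ (f 1) + ι ℝ (f 2) * ι ℝ (f 3))) = 0 := by
      set w := ι ℝ (f 0) * ι ℝ (f 1) + ι ℝ (f 2) * ι ℝ (f 3) with hwdef
      have hexp : w * w = ι ℝ (f 0) * (ι ℝ (f 1) * w) + ι ℝ (f 2) * (ι ℝ (f 3) * w) := by
        conv_lhs => rw [hwdef]
        rw [add_mul, mul_assoc, mul_assoc]
      rw [hexp, map_add, hleib (f 0), hleib (f 1), hleib (f 2), hleib (f 3), hw1]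
      simp only [mul_zero, sub_zero]
      have hre : d (ι ℝ (f 0)) * (ι ℝ (f 1) * w) - ι ℝ (f 0) * (d (ι ℝ (f 1)) * w)
           + (d (ι ℝ (f 2)) * (ι ℝ (f 3) * w) - ι ℝ (f 2) * (d (ι ℝ (f 3)) * w))
           = ((d (ι ℝ (f 0)) * ι ℝ (f 1) - ι ℝ (f 0) * d (ι ℝ (f 1)))
        + (d (ι ℝ (f 2)) * ι ℝ (f 3) - ι ℝ (f 2) * d (ι ℝ (f 3)))) * w := by
        simp only [add_mul, sub_mul, mul_assoc]
      rw [hre, hS, zero_mul]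
    rw [hww, map_smul, smul_eq_zero] at hd2
    rcases hd2 with h|h
    · norm_num at h
    · exact h
  -- rewrite d(fᵖ) in the f-coframe
  set γ : Fin 5 → Fin 5 → Fin 5 → ℝ := fun p a b => ∑ k, f p k * (B (g a)) (g b) k with hγdef
  have hγanti : ∀ p a b, γ p b a = - γ p a b := by
    intro p a b
    simp only [hγdef]
    rw [← Finset.sum_neg_distrib]
    refine Finset.sum_congr rfl fun k _ => ?_
    rw [hanti (g b) (g a)]
    simp only [Pi.neg_apply]
    ring
  have hei : ∀ i, e i = ∑ a, g a i • ι ℝ (f a) := by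
    intro i
    show ι ℝ (Pi.single i 1) = _
    rw [hG3 i, map_sum]
    simp only [map_smul]
  have hBg : ∀ a b, (B (g a)) (g b)
      = ∑ i, ∑ j, (g a i * g b j) • (B (Pi.single i 1)) (Pi.single j 1) := by
    intro a b
    have h1 : (B (∑ i : Fin 5, g a i • (Pi.single i 1 : Fin 5 → ℝ)))
        = ∑ i : Fin 5, g a i • B (Pi.single i 1) := by
      rw [map_sum]; simp only [map_smul]
    calc (B (g a)) (g b)
        = (B (∑ i : Fin 5, g a i • (Pi.single i 1 : Fin 5 → ℝ)))
            (∑ j : Fin 5, g b j • (Pi.single j 1 : Fin 5 → ℝ)) := by rw [hsingle, hsingle]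
      _ = ∑ i : Fin 5, g a i •
            (B (Pi.single i 1)) (∑ j : Fin 5, g b j • (Pi.single j 1 : Fin 5 → ℝ)) := by
          rw [h1, LinearMap.sum_apply]
          simp only [LinearMap.smul_apply]
      _ = ∑ i, ∑ j, (g a i * g b j) • (B (Pi.single i 1)) (Pi.single j 1) := by
          refine Finset.sum_congr rfl fun i _ => ?_
          rw [map_sum, Finset.smul_sum]
          refine Finset.sum_congr rfl fun j _ => ?_
          rw [map_smul, smul_smul]
  have hdv : ∀ p, d (ι ℝ (f p)) = ∑ a, ∑ b,
      (-(1/2:ℝ) * γ p a b) • (ι ℝ (f a) * ι ℝ (f b)) := by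
    intro p
    rw [hlink (f p)]
    simp only [hei]
    rw [Finset.smul_sum]
    simp only [Finset.smul_sum, Finset.sum_mul_sum, smul_mul_assoc, mul_smul_comm, smul_smul]
    rw [sum_swap4]
    refine Finset.sum_congr rfl fun a _ => Finset.sum_congr rfl fun b _ => ?_
    simp only [← Finset.sum_smul]
    congr 1
    simp only [hγdef]
    rw [hBg a b]
    simp only [Finset.sum_apply, Pi.smul_apply, smul_eq_mul, Finset.mul_sum, Finset.sum_mul]
    conv_rhs => rw [sum_swap3]
    exact Finset.sum_congr rfl fun i _ => Finset.sum_congr rfl fun j _ =>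
      Finset.sum_congr rfl fun k _ => by ring
  -- pair with the volume functional
  have massoc : ∀ x y z : ExteriorAlgebra ℝ (Fin 5 → ℝ), x * y * z = x * (y * z) := mul_assoc
  have h34 : d (ι ℝ (f 2) * ι ℝ (f 3)) = d (ι ℝ (f 2)) * ι ℝ (f 3) - ι ℝ (f 2) * d (ι ℝ (f 3)) :=
    hleib (f 2) (ι ℝ (f 3))
  have h1234 : d (ι ℝ (f 0) * (ι ℝ (f 1) * (ι ℝ (f 2) * ι ℝ (f 3))))
      = d (ι ℝ (f 0)) * (ι ℝ (f 1) * (ι ℝ (f 2) * ι ℝ (f 3)))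
        - ι ℝ (f 0) * (d (ι ℝ (f 1)) * (ι ℝ (f 2) * ι ℝ (f 3)))
        + ι ℝ (f 0) * (ι ℝ (f 1) * (d (ι ℝ (f 2)) * ι ℝ (f 3)))
        - ι ℝ (f 0) * (ι ℝ (f 1) * (ι ℝ (f 2) * d (ι ℝ (f 3)))) := by
    rw [hleib (f 0), hleib (f 1), h34]
    simp only [mul_sub]
    abel
  have h0 : d (ι ℝ (f 0)) * (ι ℝ (f 1) * (ι ℝ (f 2) * ι ℝ (f 3)))
        - ι ℝ (f 0) * (d (ι ℝ (f 1)) * (ι ℝ (f 2) * ι ℝ (f 3)))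
        + ι ℝ (f 0) * (ι ℝ (f 1) * (d (ι ℝ (f 2)) * ι ℝ (f 3)))
        - ι ℝ (f 0) * (ι ℝ (f 1) * (ι ℝ (f 2) * d (ι ℝ (f 3)))) = 0 := by
    rw [← h1234, hA]
  have hph := congrArg Phi h0
  rw [hdv 0, hdv 1, hdv 2, hdv 3] at hph
  simp only [map_sub, map_add, map_zero, Finset.sum_mul, Finset.mul_sum,
    smul_mul_assoc, mul_smul_comm, map_sum, map_smul, smul_eq_mul, massoc, Phi5] at hph
  rw [sum0 f, sum1 f, sum2 f, sum3 f, hγanti 0 0 4, hγanti 1 1 4, hγanti 2 2 4, hγanti 3 3 4] at hph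
  have hkey : (γ 0 0 4 + γ 1 1 4 + γ 2 2 4 + γ 3 3 4) * Det f = 0 := by linear_combination hph
  have hzero : γ 0 0 4 + γ 1 1 4 + γ 2 2 4 + γ 3 3 4 = 0 := by
    rcases mul_eq_zero.mp hkey with h|h
    · exact h
    · exact absurd h hΔ
  -- conclude via the trace
  have hBXX : (B X) X = 0 := by
    have h := hanti X X
    funext i
    have h2 := congrFun h i
    simp only [Pi.neg_apply] at h2
    have : (B X) X i = 0 := by linarith
    simpa using this
  have hγp4 : ∀ p : Fin 5, γ p p 4 = ∑ k, f p k * ((B (g p)) X) k := by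
    intro p
    simp only [hγdef, hG4]
  have hT5 : (∑ p : Fin 5, ∑ k, f p k * ((B (g p)) X) k) = 0 := by
    rw [Fin.sum_univ_five]
    have e4 : (∑ k, f 4 k * ((B (g 4)) X) k) = 0 := by
      rw [hG4, hBXX]
      simp
    rw [e4, ← hγp4 0, ← hγp4 1, ← hγp4 2, ← hγp4 3]
    rw [add_zero]
    linarith [hzero]
  have htrace : LinearMap.trace ℝ (Fin 5 → ℝ) (B X) = ∑ k : Fin 5, ((B X) (Pi.single k 1)) k := by
    rw [LinearMap.trace_eq_matrix_trace ℝ (Pi.basisFun ℝ (Fin 5))]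
    rw [Matrix.trace]
    refine Finset.sum_congr rfl fun k _ => ?_
    rw [Matrix.diag_apply, LinearMap.toMatrix_apply]
    simp [Pi.basisFun_apply, Pi.basisFun_repr]
  have hconn : (∑ p : Fin 5, ∑ k, f p k * ((B (g p)) X) k)
      = - ∑ k : Fin 5, ((B X) (Pi.single k 1)) k := by
    have hBgp : ∀ p, (B (g p)) X = ∑ i, g p i • (B (Pi.single i 1)) X := by
      intro p
      conv_lhs => rw [← hsingle (g p)]
      rw [map_sum, LinearMap.sum_apply]
      simp only [map_smul, LinearMap.smul_apply]
    calc (∑ p : Fin 5, ∑ k, f p k * ((B (g p)) X) k)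
        = ∑ p : Fin 5, ∑ k, ∑ i, g p i * f p k * ((B (Pi.single i 1)) X) k := by
          refine Finset.sum_congr rfl fun p _ => Finset.sum_congr rfl fun k _ => ?_
          rw [hBgp p, Finset.sum_apply, Finset.mul_sum]
          refine Finset.sum_congr rfl fun i _ => ?_
          simp only [Pi.smul_apply, smul_eq_mul]
          ring
      _ = ∑ i, ∑ k, (∑ p, g p i * f p k) * ((B (Pi.single i 1)) X) k := by
          rw [sum_swap3, Finset.sum_comm]
          refine Finset.sum_congr rfl fun i _ => Finset.sum_congr rfl fun k _ => ?_
          rw [Finset.sum_mul]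
      _ = ∑ k : Fin 5, ((B (Pi.single k 1)) X) k := by
          simp [hG2]
      _ = - ∑ k : Fin 5, ((B X) (Pi.single k 1)) k := by
          rw [← Finset.sum_neg_distrib]
          refine Finset.sum_congr rfl fun k _ => ?_
          rw [hanti (Pi.single k 1) X]
          simp
  rw [htrace]
  have := hconn ▸ hT5
  linarith [this]
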